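/- For every tree T and every pair of permutations σ, τ ∈ S_T (i.e. φ(σ) = φ(τ) = T), the descent sets coincide: D_σ = D_τ. -/

import Mathlib

/-- The minimum of `a :: l` (computed by folding `min`) is a member of `a :: l`. -/
lemma foldr_min_mem (a : ℤ) : ∀ l : List ℤ, l.foldr min a ∈ a :: l := by
  intro l
  induction l with
  | nil => simp
  | cons b l ih =>
    simp only [List.foldr_cons]
    rcases min_choice b (l.foldr min a) with h | h
    · rw [h]; simp
    · rw [h]
      rcases List.mem_cons.mp ih with h' | h'
      · simp [h']
      · simp [h']

/-- The planar binary tree `φ(I)` associated to a list `I` of (distinct) integers: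
`φ` of the empty list is the empty tree `|`, and `φ(I) = φ(I₁) ∨ φ(I₂)` where
`I = I₁ · (min I) · I₂` is the splitting of `I` at its minimal entry. -/
def phi : List ℤ → Tree Unit
  | [] => Tree.nil
  | a :: l =>
    Tree.node ()
      (phi ((a :: l).take ((a :: l).idxOf (l.foldr min a))))
      (phi ((a :: l).drop ((a :: l).idxOf (l.foldr min a) + 1)))
termination_by l => l.length
decreasing_by
  · have hm := foldr_min_mem a l
    have hk := List.idxOf_lt_length_iff.mpr hm
    simp only [List.length_take, List.length_cons, List.foldr_attach] at *
    omega
  · simp only [List.length_drop, List.length_cons]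
    omega

/-- The standardization of a list `I` of distinct integers: the list whose `j`-th entry is
the (1-indexed) position of `I_j` in the increasing ordering of the entries of `I`. -/
def stdz (I : List ℤ) : List ℤ :=
  I.map (fun x => ((I.filter (fun y => y < x)).length : ℤ) + 1)

/-- `l` is (the list of values of) a permutation of `{1, …, n}`. -/
def IsPermList (n : ℕ) (l : List ℤ) : Prop :=
  l.Perm ((List.range n).map (fun k => (k : ℤ) + 1))

/-- `S_T`: the set of permutations `σ ∈ S_{|T|}` (identified with their lists of values
`(σ(1),…,σ(n))`) such that `φ(σ) = T`. -/
def STree (T : Tree Unit) : Set (List ℤ) :=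
  {l | IsPermList T.numNodes l ∧ phi l = T}

/-- The descent set of a permutation `σ ∈ S_n` (identified with its list of values,
1-indexed): `D_σ = {i ∈ {1,…,n−1} : σ(i) > σ(i+1)}`. -/
def descentSet (l : List ℤ) : Set ℕ :=
  {i | 1 ≤ i ∧ ∃ a b, l[i - 1]? = some a ∧ l[i]? = some b ∧ b < a}

section Aux

/-- Membership in the descent set, phrased with `getElem?`. -/
lemma mem_descentSet' (l : List ℤ) (i : ℕ) :
    i ∈ descentSet l ↔ 1 ≤ i ∧ ∃ a b, l[i-1]? = some a ∧ l[i]? = some b ∧ b < a := by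
  simp [descentSet]

/-- The fold of `min` is a lower bound. -/
lemma foldr_min_le (a : ℤ) (l : List ℤ) : ∀ x ∈ a :: l, l.foldr min a ≤ x := by
  induction l with
  | nil => intro x hx; simp at hx; simp [hx]
  | cons b l ih =>
    intro x hx
    simp only [List.foldr_cons]
    rcases List.mem_cons.mp hx with h | h
    · subst h
      exact le_trans (min_le_right _ _) (ih _ (by simp))
    · rcases List.mem_cons.mp h with h' | h'
      · subst h'
        exact min_le_left _ _
      · exact le_trans (min_le_right _ _) (ih _ (by simp [h']))

lemma phi_numNodes_aux : ∀ n : ℕ, ∀ l : List ℤ, l.length ≤ n → (phi l).numNodes = l.length := by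
  intro n
  induction n with
  | zero =>
    intro l h
    rw [List.eq_nil_of_length_eq_zero (Nat.le_zero.mp h)]
    simp [phi]
  | succ n ih =>
    intro l h
    match l with
    | [] => simp [phi]
    | a :: l' =>
      rw [phi]
      have hm : l'.foldr min a ∈ a :: l' := foldr_min_mem a l'
      have hk : (a :: l').idxOf (l'.foldr min a) < (a :: l').length :=
        List.idxOf_lt_length_iff.mpr hm
      simp only [Tree.numNodes, BinaryTree.numNodes] at ih ⊢
      rw [ih _ (by simp only [List.length_take]; simp at h hk ⊢; omega),
          ih _ (by simp only [List.length_drop]; simp at h hk ⊢; omega)]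
      simp only [List.length_take, List.length_drop]
      simp at hk ⊢
      omega

lemma phi_numNodes (l : List ℤ) : (phi l).numNodes = l.length :=
  phi_numNodes_aux l.length l le_rfl

/-- The descent set read off from the tree. -/
def treeDescents : Tree Unit → Set ℕ
  | .nil => ∅
  | .node _ L R =>
      (treeDescents L ∪ (if L.numNodes = 0 then ∅ else {L.numNodes})) ∪
        ((fun j => j + (L.numNodes + 1)) '' treeDescents R)

lemma descentSet_decomp (A B : List ℤ) (m : ℤ)
    (hA : ∀ x ∈ A, m < x) (hB : ∀ x ∈ B, m < x) :
    descentSet (A ++ m :: B) =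
      (descentSet A ∪ (if A.length = 0 then (∅ : Set ℕ) else {A.length})) ∪
        ((fun j => j + (A.length + 1)) '' descentSet B) := by
  set n := A.length with hn
  ext i
  simp only [Set.mem_union, Set.mem_image, Set.mem_singleton_iff, mem_descentSet']
  constructor
  · rintro ⟨h1, a, b, ha, hb, hba⟩
    have hi : i < (A ++ m :: B).length := (List.getElem?_eq_some_iff.mp hb).1
    have hi' : i < n + (B.length + 1) := by simpa using hi
    rcases Nat.lt_or_ge i n with hc | hc
    · left; left
      refine ⟨h1, a, b, ?_, ?_, hba⟩
      · rw [List.getElem?_append, if_pos (by omega)] at ha; exact ha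
      · rw [List.getElem?_append, if_pos hc] at hb; exact hb
    · rcases Nat.lt_or_ge i (n + 1) with hc2 | hc2
      · -- i = n
        left; right
        have hne : i = n := by omega
        rw [if_neg (by omega)]
        exact hne
      · rcases Nat.lt_or_ge i (n + 2) with hc3 | hc3
        · -- i = n + 1 : impossible
          exfalso
          have hia : i - 1 = n := by omega
          rw [List.getElem?_append, if_neg (by omega), hia] at ha
          rw [show n - n = 0 from by omega, List.getElem?_cons_zero] at ha
          have ham : a = m := by injection ha; omega
          rw [List.getElem?_append, if_neg (by omega)] at hb
          rw [show i - n = 0 + 1 from by omega, List.getElem?_cons_succ] at hb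
          obtain ⟨hb0, hbeq⟩ := List.getElem?_eq_some_iff.mp hb
          have : m < b := hB _ (hbeq ▸ List.getElem_mem hb0)
          omega
        · -- i ≥ n + 2
          right
          obtain ⟨j', hj'⟩ : ∃ j', i = n + 1 + (j' + 1) := ⟨i - n - 2, by omega⟩
          refine ⟨j' + 1, ⟨by omega, a, b, ?_, ?_, hba⟩, by omega⟩
          · rw [List.getElem?_append, if_neg (by omega)] at ha
            rw [show i - 1 - n = j' + 1 from by omega, List.getElem?_cons_succ] at ha
            rw [show j' + 1 - 1 = j' from by omega]
            exact ha
          · rw [List.getElem?_append, if_neg (by omega)] at hb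
            rw [show i - n = (j' + 1) + 1 from by omega, List.getElem?_cons_succ] at hb
            exact hb
  · rintro ((⟨h1, a, b, ha, hb, hba⟩ | hmem) | ⟨j, ⟨hj1, a, b, ha, hb, hba⟩, hji⟩)
    · have hib : i < n := hn ▸ (List.getElem?_eq_some_iff.mp hb).1
      refine ⟨h1, a, b, ?_, ?_, hba⟩
      · rw [List.getElem?_append, if_pos (by omega)]; exact ha
      · rw [List.getElem?_append, if_pos (by omega)]; exact hb
    · by_cases hz : n = 0
      · rw [if_pos hz] at hmem; exact absurd hmem (Set.notMem_empty i)
      · rw [if_neg hz] at hmem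
        subst hmem
        have hA0 : n - 1 < A.length := by omega
        refine ⟨by omega, A[n-1], m, ?_, ?_, hA _ (List.getElem_mem hA0)⟩
        · rw [List.getElem?_append, if_pos (by omega)]
          exact List.getElem?_eq_getElem hA0
        · rw [List.getElem?_append, if_neg (by omega),
              show n - n = 0 from by omega, List.getElem?_cons_zero]
    · subst hji
      refine ⟨by omega, a, b, ?_, ?_, hba⟩
      · rw [List.getElem?_append, if_neg (by omega)]
        obtain ⟨j', rfl⟩ : ∃ j', j = j' + 1 := ⟨j - 1, by omega⟩
        rw [show j' + 1 + (n + 1) - 1 - n = j' + 1 from by omega, List.getElem?_cons_succ]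
        rw [show j' + 1 - 1 = j' from by omega] at ha
        exact ha
      · rw [List.getElem?_append, if_neg (by omega),
            show j + (n + 1) - n = j + 1 from by omega, List.getElem?_cons_succ]
        exact hb

lemma descentSet_eq_treeDescents_aux :
    ∀ N : ℕ, ∀ l : List ℤ, l.length ≤ N → l.Nodup → descentSet l = treeDescents (phi l) := by
  intro N
  induction N with
  | zero =>
    intro l h _
    rw [List.eq_nil_of_length_eq_zero (Nat.le_zero.mp h)]
    ext i
    simp [descentSet, phi, treeDescents]
  | succ N ih =>
    intro l h hnd
    match l with
    | [] =>
      ext i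
      simp [descentSet, phi, treeDescents]
    | a :: l' =>
      set m := l'.foldr min a with hmdef
      have hm : m ∈ a :: l' := foldr_min_mem a l'
      set k := (a :: l').idxOf m with hkdef
      have hk : k < (a :: l').length := List.idxOf_lt_length_iff.mpr hm
      set A := (a :: l').take k with hAdef
      set B := (a :: l').drop (k + 1) with hBdef
      have hgetk : (a :: l')[k] = m := List.getElem_idxOf hk
      have hsplit : A ++ m :: B = a :: l' := by
        rw [hAdef, hBdef, ← hgetk, ← List.drop_eq_getElem_cons hk, List.take_append_drop]
      have hlenA : A.length = k := by
        rw [hAdef, List.length_take]; omega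
      have hndAB : (A ++ m :: B).Nodup := hsplit ▸ hnd
      have hmid := List.nodup_middle.mp hndAB
      have hmnot : m ∉ A ++ B := (List.nodup_cons.mp hmid).1
      have hndA : A.Nodup := (List.take_sublist _ _).nodup hnd
      have hndB : B.Nodup := (List.drop_sublist _ _).nodup hnd
      have hAmin : ∀ x ∈ A, m < x := by
        intro x hx
        have hle : m ≤ x := foldr_min_le a l' x ((List.take_sublist _ _).mem hx)
        have hne : x ≠ m := by
          intro hxm; exact hmnot (List.mem_append.mpr (Or.inl (hxm ▸ hx)))
        omega
      have hBmin : ∀ x ∈ B, m < x := by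
        intro x hx
        have hle : m ≤ x := foldr_min_le a l' x ((List.drop_sublist _ _).mem hx)
        have hne : x ≠ m := by
          intro hxm; exact hmnot (List.mem_append.mpr (Or.inr (hxm ▸ hx)))
        omega
      have hlA : A.length ≤ N := by rw [hlenA]; simp at h hk; omega
      have hlB : B.length ≤ N := by rw [hBdef, List.length_drop]; simp only [List.length_cons] at h ⊢; omega
      have hphil : phi (a :: l') = Tree.node () (phi A) (phi B) := by
        rw [phi]
      calc descentSet (a :: l') = descentSet (A ++ m :: B) := by rw [hsplit]
        _ = (descentSet A ∪ (if A.length = 0 then ∅ else {A.length})) ∪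
              ((fun j => j + (A.length + 1)) '' descentSet B) :=
            descentSet_decomp A B m hAmin hBmin
        _ = treeDescents (phi (a :: l')) := by
            rw [hphil]
            simp only [treeDescents, phi_numNodes]
            rw [ih A hlA hndA, ih B hlB hndB]

lemma descentSet_eq_treeDescents (l : List ℤ) (hnd : l.Nodup) :
    descentSet l = treeDescents (phi l) :=
  descentSet_eq_treeDescents_aux l.length l le_rfl hnd

lemma nodup_of_isPermList {n : ℕ} {l : List ℤ} (h : IsPermList n l) : l.Nodup := by
  refine h.symm.nodup ?_
  simp only [bind_pure_comp, List.map_eq_map, List.map_map]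
  refine List.Nodup.map ?_ (List.nodup_range (n := n))
  intro x y hxy
  simp only [Function.comp_apply] at hxy
  omega

end Aux

/-- Any two permutations associated to the same tree have the same descent set. -/
theorem descentSet_eq_of_mem_STree (T : Tree Unit) (σ τ : List ℤ)
    (hσ : σ ∈ STree T) (hτ : τ ∈ STree T) :
    descentSet σ = descentSet τ := by
  obtain ⟨hpσ, hφσ⟩ := hσ
  obtain ⟨hpτ, hφτ⟩ := hτ
  rw [descentSet_eq_treeDescents σ (nodup_of_isPermList hpσ),
      descentSet_eq_treeDescents τ (nodup_of_isPermList hpτ), hφσ, hφτ]
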